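/- Let M be a universal n-linear order, let m ∈ {1, …, n}, and let g ∈ Aut(M) be such that for every x ∈ M there exists y with y <_m x and y <_m g y, and there exists z with x <_m z and z <_m g z. Then there exists h ∈ Aut(M) such that the automorphism g ∘ h⁻¹ ∘ g ∘ h has a single +-orbital with respect to <_m. -/

import Mathlib

/-- A set `M` equipped with `n` linear orders `<_1, …, <_n`. -/
structure NLinear (n : ℕ) (M : Type*) where
  lt : Fin n → M → M → Prop
  irrefl : ∀ i a, ¬ lt i a a
  trans : ∀ i a b c, lt i a b → lt i b c → lt i a c
  total : ∀ i a b, lt i a b ∨ a = b ∨ lt i b a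

/-- `M` with its `n` linear orders is a universal `n`-linear order: it is countably
infinite and has the one-point extension property. -/
structure IsUniversalNLinear (n : ℕ) (M : Type*) (L : NLinear n M) : Prop where
  countable : Countable M
  infinite : Infinite M
  extension : ∀ (A : Finset M) (D : Fin n → Set M),
    (∀ i, D i ⊆ ↑A) →
    (∀ i, ∀ a ∈ A, ∀ b ∈ A, L.lt i a b → b ∈ D i → a ∈ D i) →
    ∃ x, x ∉ A ∧ ∀ i, ∀ a ∈ A, (L.lt i a x ↔ a ∈ D i)

/-- The automorphism group of an `n`-linearly ordered set, as a subgroup of `Equiv.Perm M`. -/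
def NLinear.aut {n : ℕ} {M : Type*} (L : NLinear n M) : Subgroup (Equiv.Perm M) where
  carrier := {g | ∀ i a b, L.lt i a b ↔ L.lt i (g a) (g b)}
  one_mem' := fun _ _ _ => Iff.rfl
  mul_mem' := by
    intro g h hg hh i a b
    exact (hh i a b).trans (hg i (h a) (h b))
  inv_mem' := by
    intro g hg i a b
    simpa using (hg i (g⁻¹ a) (g⁻¹ b)).symm

/-- `f` has a single `+`-orbital with respect to `<_m`. -/
def NLinear.SinglePlus {n : ℕ} {M : Type*} (L : NLinear n M) (m : Fin n)
    (f : Equiv.Perm M) : Prop :=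
  ∃ a : M, L.lt m a (f a) ∧ (∀ x : M, ∃ k : ℤ, L.lt m x ((f ^ k) a)) ∧
    (∀ x : M, ∃ k : ℤ, L.lt m ((f ^ k) a) x)

/-- `f` has a single `−`-orbital with respect to `<_m`. -/
def NLinear.SingleMinus {n : ℕ} {M : Type*} (L : NLinear n M) (m : Fin n)
    (f : Equiv.Perm M) : Prop :=
  ∃ a : M, L.lt m (f a) a ∧ (∀ x : M, ∃ k : ℤ, L.lt m x ((f ^ k) a)) ∧
    (∀ x : M, ∃ k : ℤ, L.lt m ((f ^ k) a) x)

/-- `f` has a `+`-orbital unbounded above with respect to `<_m`. -/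
def NLinear.PlusUnbAbove {n : ℕ} {M : Type*} (L : NLinear n M) (m : Fin n)
    (f : Equiv.Perm M) : Prop :=
  ∃ a : M, L.lt m a (f a) ∧ ∀ x : M, ∃ k : ℤ, L.lt m x ((f ^ k) a)

/-- `f` has a `−`-orbital unbounded below with respect to `<_m`. -/
def NLinear.MinusUnbBelow {n : ℕ} {M : Type*} (L : NLinear n M) (m : Fin n)
    (f : Equiv.Perm M) : Prop :=
  ∃ b : M, L.lt m (f b) b ∧ ∀ x : M, ∃ k : ℤ, L.lt m ((f ^ k) b) x

set_option linter.unusedSectionVars false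

namespace Stmt9Aux
attribute [local instance] Classical.propDecidable

variable {n : ℕ} {M : Type*} [DecidableEq M] (L : NLinear n M)

lemma asymm {i : Fin n} {a b : M} (h : L.lt i a b) : ¬ L.lt i b a :=
  fun h' => L.irrefl i a (L.trans i a b a h h')

lemma lt_of_ne_not_lt {i : Fin n} {a b : M} (hne : a ≠ b) (h : ¬ L.lt i b a) : L.lt i a b := by
  rcases L.total i a b with h1 | h1 | h1
  · exact h1
  · exact absurd h1 hne
  · exact absurd h1 h

lemma flipIff {i : Fin n} {a b x y : M} (H : L.lt i x a ↔ L.lt i y b)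
    (h1 : x ≠ a) (h2 : y ≠ b) : L.lt i a x ↔ L.lt i b y := by
  constructor
  · intro h
    exact lt_of_ne_not_lt L (Ne.symm h2) (fun h' => asymm L h (H.mpr h'))
  · intro h
    exact lt_of_ne_not_lt L (Ne.symm h1) (fun h' => asymm L h (H.mp h'))

/-- A finite partial isomorphism, given as a finite set of pairs. -/
def isIso (P : Finset (M × M)) : Prop :=
  ∀ i : Fin n, ∀ p ∈ P, ∀ q ∈ P, (L.lt i p.1 q.1 ↔ L.lt i p.2 q.2)

lemma isIso.sndUniq (i : Fin n) {P : Finset (M × M)} (h : isIso L P) {p q : M × M}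
    (hp : p ∈ P) (hq : q ∈ P) (he : p.1 = q.1) : p.2 = q.2 := by
  have h1 : ¬ L.lt i p.2 q.2 := fun hh => L.irrefl i p.1 (he ▸ (h i p hp q hq).mpr hh)
  have h2 : ¬ L.lt i q.2 p.2 := fun hh => L.irrefl i p.1 (by
    have := (h i q hq p hp).mpr hh
    rw [← he] at this; exact this)
  rcases L.total i p.2 q.2 with h' | h' | h'
  · exact absurd h' h1
  · exact h'
  · exact absurd h' h2

lemma isIso.fstUniq (i : Fin n) {P : Finset (M × M)} (h : isIso L P) {p q : M × M}
    (hp : p ∈ P) (hq : q ∈ P) (he : p.2 = q.2) : p.1 = q.1 := by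
  have h1 : ¬ L.lt i p.1 q.1 := fun hh => L.irrefl i p.2 (he ▸ (h i p hp q hq).mp hh)
  have h2 : ¬ L.lt i q.1 p.1 := fun hh => L.irrefl i p.2 (by
    have := (h i q hq p hp).mp hh
    rw [← he] at this; exact this)
  rcases L.total i p.1 q.1 with h' | h' | h'
  · exact absurd h' h1
  · exact h'
  · exact absurd h' h2

lemma isIso.insert {P : Finset (M × M)} (h : isIso L P) {a b : M}
    (ha : ∀ q ∈ P, a ≠ q.1) (hb : ∀ q ∈ P, b ≠ q.2)
    (H : ∀ i : Fin n, ∀ q ∈ P, (L.lt i q.1 a ↔ L.lt i q.2 b)) :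
    isIso L (insert (a, b) P) := by
  intro i p hp q hq
  rcases Finset.mem_insert.mp hp with hp' | hp' <;> rcases Finset.mem_insert.mp hq with hq' | hq'
  · subst hp'; subst hq'
    exact iff_of_false (L.irrefl i a) (L.irrefl i b)
  · subst hp'
    exact flipIff L (H i q hq') (Ne.symm (ha q hq')) (Ne.symm (hb q hq'))
  · subst hq'
    exact H i p hp'
  · exact h i p hp' q hq'

/-- downward closure of `S` inside the finite set `A`, w.r.t. order `i`. -/
def dcl (i : Fin n) (S : Set M) (A : Finset M) : Set M :=
  {x | x ∈ A ∧ ∃ y ∈ S, x = y ∨ L.lt i x y}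

lemma dcl_subset (i : Fin n) (S : Set M) (A : Finset M) : dcl L i S A ⊆ ↑A :=
  fun _ hx => hx.1

lemma dcl_dc (i : Fin n) (S : Set M) (A : Finset M) :
    ∀ a ∈ A, ∀ b ∈ A, L.lt i a b → b ∈ dcl L i S A → a ∈ dcl L i S A := by
  rintro a ha b _ hab ⟨_, y, hy, h | h⟩
  · exact ⟨ha, y, hy, Or.inr (h ▸ hab)⟩
  · exact ⟨ha, y, hy, Or.inr (L.trans i a b y hab h)⟩

lemma dcl_inter {i : Fin n} {S : Set M} {B : Finset M} {A : Finset M}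
    (hSB : S ⊆ ↑B) (hdc : ∀ a ∈ B, ∀ b ∈ B, L.lt i a b → b ∈ S → a ∈ S)
    {x : M} (hx : x ∈ B) (hxA : x ∈ A) : x ∈ dcl L i S A ↔ x ∈ S := by
  constructor
  · rintro ⟨_, y, hy, h | h⟩
    · exact h ▸ hy
    · exact hdc x hx y (hSB hy) h hy
  · intro hxS
    exact ⟨hxA, x, hxS, Or.inl rfl⟩

variable (hL : IsUniversalNLinear n M L) (m : Fin n) (G : Equiv.Perm M)
  (hG : ∀ (i : Fin n) (a b : M), L.lt i a b ↔ L.lt i (G a) (G b))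
  (hZ : ∀ x, ∃ z, L.lt m x z ∧ L.lt m z (G z))
  (hV : ∀ x, ∃ w, L.lt m w x ∧ L.lt m (G.symm w) w)

include hZ in
lemma zAbove [Nonempty M] (A : Finset M) :
    ∃ z, (∀ x ∈ A, L.lt m x z) ∧ L.lt m z (G z) := by
  classical
  induction A using Finset.induction_on with
  | empty =>
    obtain ⟨z, _, hz⟩ := hZ (Classical.arbitrary M)
    exact ⟨z, by simp, hz⟩
  | @insert a A hanot IH =>
    obtain ⟨z, hz1, hz2⟩ := IH
    rcases L.total m a z with h | h | h
    · obtain ⟨z', h1, h2⟩ := hZ z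
      refine ⟨z', ?_, h2⟩
      intro x hx
      rcases Finset.mem_insert.mp hx with rfl | hx
      · exact L.trans _ _ _ _ h h1
      · exact L.trans _ _ _ _ (hz1 x hx) h1
    · subst h
      obtain ⟨z', h1, h2⟩ := hZ a
      refine ⟨z', ?_, h2⟩
      intro x hx
      rcases Finset.mem_insert.mp hx with rfl | hx
      · exact h1
      · exact L.trans _ _ _ _ (hz1 x hx) h1
    · obtain ⟨z', h1, h2⟩ := hZ a
      refine ⟨z', ?_, h2⟩
      intro x hx
      rcases Finset.mem_insert.mp hx with rfl | hx
      · exact h1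
      · exact L.trans _ _ _ _ (hz1 x hx) (L.trans _ _ _ _ h h1)

include hV in
lemma vBelow [Nonempty M] (A : Finset M) :
    ∃ w, (∀ x ∈ A, L.lt m w x) ∧ L.lt m (G.symm w) w := by
  classical
  induction A using Finset.induction_on with
  | empty =>
    obtain ⟨w, _, hw⟩ := hV (Classical.arbitrary M)
    exact ⟨w, by simp, hw⟩
  | @insert a A hanot IH =>
    obtain ⟨w, hw1, hw2⟩ := IH
    rcases L.total m a w with h | h | h
    · obtain ⟨w', h1, h2⟩ := hV a
      refine ⟨w', ?_, h2⟩
      intro x hx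
      rcases Finset.mem_insert.mp hx with rfl | hx
      · exact h1
      · exact L.trans _ _ _ _ (L.trans _ _ _ _ h1 h) (hw1 x hx)
    · subst h
      obtain ⟨w', h1, h2⟩ := hV a
      refine ⟨w', ?_, h2⟩
      intro x hx
      rcases Finset.mem_insert.mp hx with rfl | hx
      · exact h1
      · exact L.trans _ _ _ _ h1 (hw1 x hx)
    · obtain ⟨w', h1, h2⟩ := hV w
      refine ⟨w', ?_, h2⟩
      intro x hx
      rcases Finset.mem_insert.mp hx with rfl | hx
      · exact L.trans _ _ _ _ h1 h
      · exact L.trans _ _ _ _ h1 (hw1 x hx)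

include hL hG hZ in
lemma ztop [Nonempty M] (A : Finset M) (D : Fin n → Set M) (hsub : ∀ i, D i ⊆ ↑A)
    (hdc : ∀ i, ∀ a ∈ A, ∀ b ∈ A, L.lt i a b → b ∈ D i → a ∈ D i) :
    ∃ z, z ∉ A ∧ (∀ i, i ≠ m → ∀ a ∈ A, (L.lt i a z ↔ a ∈ D i)) ∧
      (∀ a ∈ A, L.lt m a z) ∧ L.lt m z (G z) := by
  obtain ⟨z0, hz0A, hz0Z⟩ := zAbove L m G hZ A
  set A' : Finset M := insert z0 (insert (G z0) A) with hA'
  have hz0A' : z0 ∈ A' := Finset.mem_insert_self _ _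
  have hGz0A' : G z0 ∈ A' := by simp [hA']
  have hAA' : ∀ a ∈ A, a ∈ A' := by intro a ha; simp [hA', ha]
  have hGz0gt : ∀ a ∈ A, L.lt m a (G z0) := fun a ha => L.trans _ _ _ _ (hz0A a ha) hz0Z
  have hGz0nA : G z0 ∉ A := fun h => L.irrefl m (G z0) (hGz0gt _ h)
  have hGz0nz0 : G z0 ≠ z0 := by
    intro h
    have := hz0Z; rw [h] at this; exact L.irrefl m z0 this
  set D' : Fin n → Set M := fun i => if i = m then (↑A ∪ {z0} : Set M) else dcl L i (D i) A' with hD'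
  have h1 : ∀ i, D' i ⊆ ↑A' := by
    intro i x hx
    by_cases h : i = m
    · rw [hD'] at hx; simp only [h, if_pos rfl] at hx
      rcases hx with hx | hx
      · exact_mod_cast hAA' x hx
      · simp only [Set.mem_singleton_iff] at hx; exact_mod_cast hx ▸ hz0A'
    · rw [hD'] at hx; simp only [if_neg h] at hx
      exact dcl_subset L i (D i) A' hx
  have h2 : ∀ i, ∀ a ∈ A', ∀ b ∈ A', L.lt i a b → b ∈ D' i → a ∈ D' i := by
    intro i a ha b hb hab hbD
    by_cases h : i = m
    · subst h
      rw [hD'] at hbD ⊢; simp only [if_pos rfl] at hbD ⊢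
      have hblt : L.lt i b (G z0) := by
        rcases hbD with hb | hb
        · exact hGz0gt b hb
        · simp only [Set.mem_singleton_iff] at hb; exact hb ▸ hz0Z
      rcases Finset.mem_insert.mp ha with rfl | ha
      · exact Or.inr rfl
      · rcases Finset.mem_insert.mp ha with rfl | ha
        · exact absurd (L.trans _ _ _ _ hab hblt) (L.irrefl i (G z0))
        · exact Or.inl ha
    · rw [hD'] at hbD ⊢; simp only [if_neg h] at hbD ⊢
      exact dcl_dc L i (D i) A' a ha b hb hab hbD
  obtain ⟨z, hzA', hz⟩ := hL.extension A' D' h1 h2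
  have hzm : ∀ a ∈ A, L.lt m a z := by
    intro a ha
    refine (hz m a (hAA' a ha)).mpr ?_
    rw [hD']; simp only [if_pos rfl]; exact Or.inl ha
  have hz0z : L.lt m z0 z := by
    refine (hz m z0 hz0A').mpr ?_
    rw [hD']; simp only [if_pos rfl]; exact Or.inr rfl
  have hnGz0 : ¬ L.lt m (G z0) z := by
    intro h
    have := (hz m (G z0) hGz0A').mp h
    rw [hD'] at this; simp only [if_pos rfl] at this
    rcases this with h' | h'
    · exact hGz0nA h'
    · exact hGz0nz0 h'
  have hzne : z ≠ G z0 := by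
    intro h; exact hzA' (h ▸ hGz0A')
  have hzGz0 : L.lt m z (G z0) := lt_of_ne_not_lt L hzne hnGz0
  have hzZ : L.lt m z (G z) := L.trans _ _ _ _ hzGz0 ((hG m z0 z).mp hz0z)
  refine ⟨z, fun h => hzA' (hAA' z h), ?_, hzm, hzZ⟩
  intro i hi a ha
  have := hz i a (hAA' a ha)
  rw [hD'] at this; simp only [if_neg hi] at this
  exact this.trans (dcl_inter L (hsub i) (hdc i) ha (hAA' a ha))

include hL hG hV in
lemma vbot [Nonempty M] (A : Finset M) (D : Fin n → Set M) (hsub : ∀ i, D i ⊆ ↑A)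
    (hdc : ∀ i, ∀ a ∈ A, ∀ b ∈ A, L.lt i a b → b ∈ D i → a ∈ D i) :
    ∃ z, z ∉ A ∧ (∀ i, i ≠ m → ∀ a ∈ A, (L.lt i a z ↔ a ∈ D i)) ∧
      (∀ a ∈ A, L.lt m z a) ∧ L.lt m (G.symm z) z := by
  obtain ⟨w0, hw0A, hw0V⟩ := vBelow L m G hV A
  set A' : Finset M := insert w0 (insert (G.symm w0) A) with hA'
  have hw0A' : w0 ∈ A' := Finset.mem_insert_self _ _
  have hsA' : G.symm w0 ∈ A' := by simp [hA']
  have hAA' : ∀ a ∈ A, a ∈ A' := by intro a ha; simp [hA', ha]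
  have hslt : ∀ a ∈ A, L.lt m (G.symm w0) a := fun a ha => L.trans _ _ _ _ hw0V (hw0A a ha)
  have hsnA : G.symm w0 ∉ A := fun h => L.irrefl m (G.symm w0) (hslt _ h)
  have hsnw0 : G.symm w0 ≠ w0 := by
    intro h
    have := hw0V; rw [h] at this; exact L.irrefl m w0 this
  set D' : Fin n → Set M := fun i => if i = m then ({G.symm w0} : Set M) else dcl L i (D i) A' with hD'
  have h1 : ∀ i, D' i ⊆ ↑A' := by
    intro i x hx
    by_cases h : i = m
    · rw [hD'] at hx; simp only [h, if_pos rfl, Set.mem_singleton_iff] at hx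
      exact_mod_cast hx ▸ hsA'
    · rw [hD'] at hx; simp only [if_neg h] at hx
      exact dcl_subset L i (D i) A' hx
  have h2 : ∀ i, ∀ a ∈ A', ∀ b ∈ A', L.lt i a b → b ∈ D' i → a ∈ D' i := by
    intro i a ha b hb hab hbD
    by_cases h : i = m
    · subst h
      rw [hD'] at hbD ⊢; simp only [if_pos rfl, Set.mem_singleton_iff] at hbD ⊢
      subst hbD
      exfalso
      rcases Finset.mem_insert.mp ha with rfl | ha
      · exact asymm L hw0V hab
      · rcases Finset.mem_insert.mp ha with rfl | ha
        · exact L.irrefl _ _ hab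
        · exact asymm L (hslt a ha) hab
    · rw [hD'] at hbD ⊢; simp only [if_neg h] at hbD ⊢
      exact dcl_dc L i (D i) A' a ha b hb hab hbD
  obtain ⟨z, hzA', hz⟩ := hL.extension A' D' h1 h2
  have hsz : L.lt m (G.symm w0) z := by
    refine (hz m _ hsA').mpr ?_
    rw [hD']; simp only [if_pos rfl]; exact rfl
  have hnw0 : ¬ L.lt m w0 z := by
    intro h
    have := (hz m w0 hw0A').mp h
    rw [hD'] at this; simp only [if_pos rfl, Set.mem_singleton_iff] at this
    exact hsnw0 this.symm
  have hzw0 : L.lt m z w0 := lt_of_ne_not_lt L (fun h => hzA' (h ▸ hw0A')) hnw0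
  have hzm : ∀ a ∈ A, L.lt m z a := fun a ha => L.trans _ _ _ _ hzw0 (hw0A a ha)
  have hzV : L.lt m (G.symm z) z := by
    have h1' : L.lt m (G.symm z) (G.symm w0) := by
      have := (hG m (G.symm z) (G.symm w0)).mpr
      simp only [Equiv.apply_symm_apply] at this
      exact this hzw0
    exact L.trans _ _ _ _ h1' hsz
  refine ⟨z, fun h => hzA' (hAA' z h), ?_, hzm, hzV⟩
  intro i hi a ha
  have := hz i a (hAA' a ha)
  rw [hD'] at this; simp only [if_neg hi] at this
  exact this.trans (dcl_inter L (hsub i) (hdc i) ha (hAA' a ha))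


lemma mem_snd {P : Finset (M × M)} {q : M × M} (hq : q ∈ P) : q.2 ∈ P.image Prod.snd :=
  Finset.mem_image.mpr ⟨q, hq, rfl⟩

lemma mem_fst {P : Finset (M × M)} {q : M × M} (hq : q ∈ P) : q.1 ∈ P.image Prod.fst :=
  Finset.mem_image.mpr ⟨q, hq, rfl⟩

/-- The forward type-sets for extending at a new domain point `x`. -/
noncomputable def fwdS (P : Finset (M × M)) (x : M) (i : Fin n) : Set M :=
  ↑((P.filter (fun q : M × M => L.lt i q.1 x)).image Prod.snd)

lemma fwdS_sub (P : Finset (M × M)) (x : M) (i : Fin n) :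
    fwdS L P x i ⊆ ↑(P.image Prod.snd) := by
  intro z hz
  simp only [fwdS, Finset.coe_image, Set.mem_image, Finset.mem_coe, Finset.mem_filter] at hz
  obtain ⟨q, ⟨hq, _⟩, rfl⟩ := hz
  exact_mod_cast mem_snd hq

lemma fwdS_dc (P : Finset (M × M)) (hP : isIso L P) (x : M) (i : Fin n) :
    ∀ a ∈ P.image Prod.snd, ∀ b ∈ P.image Prod.snd, L.lt i a b → b ∈ fwdS L P x i →
      a ∈ fwdS L P x i := by
  intro a ha b _ hab hb
  simp only [fwdS, Finset.coe_image, Set.mem_image, Finset.mem_coe, Finset.mem_filter] at hb ⊢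
  obtain ⟨q, ⟨hq, hqx⟩, rfl⟩ := hb
  obtain ⟨p, hp, rfl⟩ := Finset.mem_image.mp ha
  refine ⟨p, ⟨hp, ?_⟩, rfl⟩
  exact L.trans _ _ _ _ ((hP i p hp q hq).mpr hab) hqx

lemma fwdS_iff (P : Finset (M × M)) (hP : isIso L P) (x : M) (i : Fin n)
    {q : M × M} (hq : q ∈ P) : q.2 ∈ fwdS L P x i ↔ L.lt i q.1 x := by
  constructor
  · intro h
    simp only [fwdS, Finset.coe_image, Set.mem_image, Finset.mem_coe, Finset.mem_filter] at h
    obtain ⟨p, ⟨hp, hpx⟩, hpe⟩ := h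
    have := isIso.fstUniq L i hP hp hq hpe
    rwa [this] at hpx
  · intro h
    simp only [fwdS, Finset.coe_image, Set.mem_image, Finset.mem_coe, Finset.mem_filter]
    exact ⟨q, ⟨hq, h⟩, rfl⟩

/-- The backward type-sets for extending at a new range point `y`. -/
noncomputable def bwdS (P : Finset (M × M)) (y : M) (i : Fin n) : Set M :=
  ↑((P.filter (fun q : M × M => L.lt i q.2 y)).image Prod.fst)

lemma bwdS_sub (P : Finset (M × M)) (y : M) (i : Fin n) :
    bwdS L P y i ⊆ ↑(P.image Prod.fst) := by
  intro z hz
  simp only [bwdS, Finset.coe_image, Set.mem_image, Finset.mem_coe, Finset.mem_filter] at hz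
  obtain ⟨q, ⟨hq, _⟩, rfl⟩ := hz
  exact_mod_cast mem_fst hq

lemma bwdS_dc (P : Finset (M × M)) (hP : isIso L P) (y : M) (i : Fin n) :
    ∀ a ∈ P.image Prod.fst, ∀ b ∈ P.image Prod.fst, L.lt i a b → b ∈ bwdS L P y i →
      a ∈ bwdS L P y i := by
  intro a ha b _ hab hb
  simp only [bwdS, Finset.coe_image, Set.mem_image, Finset.mem_coe, Finset.mem_filter] at hb ⊢
  obtain ⟨q, ⟨hq, hqy⟩, rfl⟩ := hb
  obtain ⟨p, hp, rfl⟩ := Finset.mem_image.mp ha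
  refine ⟨p, ⟨hp, ?_⟩, rfl⟩
  exact L.trans _ _ _ _ ((hP i p hp q hq).mp hab) hqy

lemma bwdS_iff (P : Finset (M × M)) (hP : isIso L P) (y : M) (i : Fin n)
    {q : M × M} (hq : q ∈ P) : q.1 ∈ bwdS L P y i ↔ L.lt i q.2 y := by
  constructor
  · intro h
    simp only [bwdS, Finset.coe_image, Set.mem_image, Finset.mem_coe, Finset.mem_filter] at h
    obtain ⟨p, ⟨hp, hpy⟩, hpe⟩ := h
    have := isIso.sndUniq L i hP hp hq hpe
    rwa [this] at hpy
  · intro h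
    simp only [bwdS, Finset.coe_image, Set.mem_image, Finset.mem_coe, Finset.mem_filter]
    exact ⟨q, ⟨hq, h⟩, rfl⟩

include hL hG hZ in
lemma extend_fwd_ztop [Nonempty M] (P : Finset (M × M)) (hP : isIso L P) (x : M)
    (hx : ∀ q ∈ P, L.lt m q.1 x) (E : Finset M) :
    ∃ b, (∀ q ∈ P, L.lt m q.2 b) ∧ (∀ e ∈ E, L.lt m e b) ∧ L.lt m b (G b) ∧
      isIso L (insert (x, b) P) := by
  classical
  set A : Finset M := P.image Prod.snd ∪ E with hA
  have hPA : ∀ q ∈ P, q.2 ∈ A := fun q hq => Finset.mem_union_left _ (mem_snd hq)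
  set D : Fin n → Set M := fun i => dcl L i (fwdS L P x i) A with hD
  obtain ⟨b, hbA, hbi, hbm, hbZ⟩ := ztop L hL m G hG hZ A D
    (fun i => dcl_subset L i _ A) (fun i => dcl_dc L i _ A)
  have h2 : ∀ q ∈ P, L.lt m q.2 b := fun q hq => hbm q.2 (hPA q hq)
  have hE : ∀ e ∈ E, L.lt m e b := fun e he => hbm e (Finset.mem_union_right _ he)
  have hbne : ∀ q ∈ P, b ≠ q.2 := fun q hq h => L.irrefl m b (h ▸ h2 q hq)
  have hxne : ∀ q ∈ P, x ≠ q.1 := fun q hq h => L.irrefl m x (h ▸ hx q hq)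
  have key : ∀ i : Fin n, ∀ q ∈ P, (L.lt i q.1 x ↔ L.lt i q.2 b) := by
    intro i q hq
    by_cases hi : i = m
    · subst hi; exact iff_of_true (hx q hq) (h2 q hq)
    · have hiff := hbi i hi q.2 (hPA q hq)
      rw [hD] at hiff
      rw [← fwdS_iff L P hP x i hq, ← hiff.trans
        (dcl_inter L (fwdS_sub L P x i) (fwdS_dc L P hP x i) (mem_snd hq) (hPA q hq))]
  exact ⟨b, h2, hE, hbZ, isIso.insert L hP hxne hbne key⟩

include hL hG hZ in
lemma extend_bwd_ztop [Nonempty M] (P : Finset (M × M)) (hP : isIso L P) (y : M)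
    (hy : ∀ q ∈ P, L.lt m q.2 y) (E : Finset M) :
    ∃ a, (∀ q ∈ P, L.lt m q.1 a) ∧ (∀ e ∈ E, L.lt m e a) ∧ L.lt m a (G a) ∧
      isIso L (insert (a, y) P) := by
  classical
  set A : Finset M := P.image Prod.fst ∪ E with hA
  have hPA : ∀ q ∈ P, q.1 ∈ A := fun q hq => Finset.mem_union_left _ (mem_fst hq)
  set D : Fin n → Set M := fun i => dcl L i (bwdS L P y i) A with hD
  obtain ⟨a, haA, hai, ham, haZ⟩ := ztop L hL m G hG hZ A D
    (fun i => dcl_subset L i _ A) (fun i => dcl_dc L i _ A)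
  have h2 : ∀ q ∈ P, L.lt m q.1 a := fun q hq => ham q.1 (hPA q hq)
  have hE : ∀ e ∈ E, L.lt m e a := fun e he => ham e (Finset.mem_union_right _ he)
  have hane : ∀ q ∈ P, a ≠ q.1 := fun q hq h => L.irrefl m a (h ▸ h2 q hq)
  have hyne : ∀ q ∈ P, y ≠ q.2 := fun q hq h => L.irrefl m y (h ▸ hy q hq)
  have key : ∀ i : Fin n, ∀ q ∈ P, (L.lt i q.1 a ↔ L.lt i q.2 y) := by
    intro i q hq
    by_cases hi : i = m
    · subst hi; exact iff_of_true (h2 q hq) (hy q hq)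
    · have hiff := hai i hi q.1 (hPA q hq)
      rw [hD] at hiff
      rw [hiff.trans
        (dcl_inter L (bwdS_sub L P y i) (bwdS_dc L P hP y i) (mem_fst hq) (hPA q hq)),
        bwdS_iff L P hP y i hq]
  exact ⟨a, h2, hE, haZ, isIso.insert L hP hane hyne key⟩

include hL hG hV in
lemma extend_fwd_vbot [Nonempty M] (P : Finset (M × M)) (hP : isIso L P) (x : M)
    (hx : ∀ q ∈ P, L.lt m x q.1) (E : Finset M) :
    ∃ b, (∀ q ∈ P, L.lt m b q.2) ∧ (∀ e ∈ E, L.lt m b e) ∧ L.lt m (G.symm b) b ∧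
      isIso L (insert (x, b) P) := by
  classical
  set A : Finset M := P.image Prod.snd ∪ E with hA
  have hPA : ∀ q ∈ P, q.2 ∈ A := fun q hq => Finset.mem_union_left _ (mem_snd hq)
  set D : Fin n → Set M := fun i => dcl L i (fwdS L P x i) A with hD
  obtain ⟨b, hbA, hbi, hbm, hbV⟩ := vbot L hL m G hG hV A D
    (fun i => dcl_subset L i _ A) (fun i => dcl_dc L i _ A)
  have h2 : ∀ q ∈ P, L.lt m b q.2 := fun q hq => hbm q.2 (hPA q hq)
  have hE : ∀ e ∈ E, L.lt m b e := fun e he => hbm e (Finset.mem_union_right _ he)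
  have hbne : ∀ q ∈ P, b ≠ q.2 := fun q hq h => by
    have := h2 q hq; rw [← h] at this; exact L.irrefl m b this
  have hxne : ∀ q ∈ P, x ≠ q.1 := fun q hq h => by
    have := hx q hq; rw [← h] at this; exact L.irrefl m x this
  have key : ∀ i : Fin n, ∀ q ∈ P, (L.lt i q.1 x ↔ L.lt i q.2 b) := by
    intro i q hq
    by_cases hi : i = m
    · subst hi
      exact iff_of_false (asymm L (hx q hq)) (asymm L (h2 q hq))
    · have hiff := hbi i hi q.2 (hPA q hq)
      rw [hD] at hiff
      rw [← fwdS_iff L P hP x i hq, ← hiff.trans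
        (dcl_inter L (fwdS_sub L P x i) (fwdS_dc L P hP x i) (mem_snd hq) (hPA q hq))]
  exact ⟨b, h2, hE, hbV, isIso.insert L hP hxne hbne key⟩

include hL hG hV in
lemma extend_bwd_vbot [Nonempty M] (P : Finset (M × M)) (hP : isIso L P) (y : M)
    (hy : ∀ q ∈ P, L.lt m y q.2) (E : Finset M) :
    ∃ a, (∀ q ∈ P, L.lt m a q.1) ∧ (∀ e ∈ E, L.lt m a e) ∧ L.lt m (G.symm a) a ∧
      isIso L (insert (a, y) P) := by
  classical
  set A : Finset M := P.image Prod.fst ∪ E with hA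
  have hPA : ∀ q ∈ P, q.1 ∈ A := fun q hq => Finset.mem_union_left _ (mem_fst hq)
  set D : Fin n → Set M := fun i => dcl L i (bwdS L P y i) A with hD
  obtain ⟨a, haA, hai, ham, haV⟩ := vbot L hL m G hG hV A D
    (fun i => dcl_subset L i _ A) (fun i => dcl_dc L i _ A)
  have h2 : ∀ q ∈ P, L.lt m a q.1 := fun q hq => ham q.1 (hPA q hq)
  have hE : ∀ e ∈ E, L.lt m a e := fun e he => ham e (Finset.mem_union_right _ he)
  have hane : ∀ q ∈ P, a ≠ q.1 := fun q hq h => by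
    have := h2 q hq; rw [← h] at this; exact L.irrefl m a this
  have hyne : ∀ q ∈ P, y ≠ q.2 := fun q hq h => by
    have := hy q hq; rw [← h] at this; exact L.irrefl m y this
  have key : ∀ i : Fin n, ∀ q ∈ P, (L.lt i q.1 a ↔ L.lt i q.2 y) := by
    intro i q hq
    by_cases hi : i = m
    · subst hi
      exact iff_of_false (asymm L (h2 q hq)) (asymm L (hy q hq))
    · have hiff := hai i hi q.1 (hPA q hq)
      rw [hD] at hiff
      rw [hiff.trans
        (dcl_inter L (bwdS_sub L P y i) (bwdS_dc L P hP y i) (mem_fst hq) (hPA q hq)),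
        bwdS_iff L P hP y i hq]
  exact ⟨a, h2, hE, haV, isIso.insert L hP hane hyne key⟩

include hL in
lemma extend_fwd_plain (P : Finset (M × M)) (hP : isIso L P) (x : M)
    (hx : ∀ q ∈ P, x ≠ q.1) :
    ∃ b, (∀ q ∈ P, b ≠ q.2) ∧ isIso L (insert (x, b) P) := by
  classical
  obtain ⟨b, hbA, hb⟩ := hL.extension (P.image Prod.snd) (fwdS L P x)
    (fwdS_sub L P x) (fwdS_dc L P hP x)
  have hbne : ∀ q ∈ P, b ≠ q.2 := fun q hq h => hbA (h ▸ mem_snd hq)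
  have key : ∀ i : Fin n, ∀ q ∈ P, (L.lt i q.1 x ↔ L.lt i q.2 b) := by
    intro i q hq
    rw [← fwdS_iff L P hP x i hq, ← hb i q.2 (mem_snd hq)]
  exact ⟨b, hbne, isIso.insert L hP hx hbne key⟩

include hL in
lemma extend_bwd_float (P : Finset (M × M)) (hP : isIso L P) (y : M)
    (hy : ∀ q ∈ P, y ≠ q.2) (tp lo : M)
    (htp : ∀ q ∈ P, L.lt m q.1 tp) (hlo : ∀ q ∈ P, L.lt m lo q.1)
    (hlotp : L.lt m lo tp) :
    ∃ a, (∀ q ∈ P, a ≠ q.1) ∧ L.lt m a tp ∧ L.lt m lo a ∧ isIso L (insert (a, y) P) := by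
  classical
  set A : Finset M := insert tp (insert lo (P.image Prod.fst)) with hA
  have htpA : tp ∈ A := Finset.mem_insert_self _ _
  have hloA : lo ∈ A := by simp [hA]
  have hPA : ∀ q ∈ P, q.1 ∈ A := fun q hq => hA ▸ Finset.mem_insert_of_mem (Finset.mem_insert_of_mem (mem_fst hq))
  have htpnfst : tp ∉ P.image Prod.fst := by
    intro h
    obtain ⟨q, hq, hqe⟩ := Finset.mem_image.mp h
    exact L.irrefl m tp (hqe ▸ htp q hq)
  have htpnlo : tp ≠ lo := fun h => L.irrefl m lo (h ▸ hlotp)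
  set D : Fin n → Set M := fun i =>
    if i = m then (bwdS L P y m ∪ {lo} : Set M) else dcl L i (bwdS L P y i) A with hD
  have h1 : ∀ i, D i ⊆ ↑A := by
    intro i z hz
    rw [hD] at hz
    by_cases h : i = m
    · simp only [h, if_pos rfl] at hz
      rcases hz with hz | hz
      · have hsub : (↑(P.image Prod.fst) : Set M) ⊆ ↑A := by
          intro u hu
          simp only [Finset.mem_coe] at hu ⊢
          exact hA ▸ Finset.mem_insert_of_mem (Finset.mem_insert_of_mem hu)
        exact hsub (bwdS_sub L P y m hz)
      · simp only [Set.mem_singleton_iff] at hz; exact_mod_cast hz ▸ hloA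
    · simp only [if_neg h] at hz
      exact dcl_subset L i _ A hz
  have h2 : ∀ i, ∀ a ∈ A, ∀ b ∈ A, L.lt i a b → b ∈ D i → a ∈ D i := by
    intro i a ha b hb hab hbD
    rw [hD] at hbD ⊢
    by_cases h : i = m
    · simp only [if_pos h] at hbD ⊢
      rw [h] at hab
      rcases Finset.mem_insert.mp ha with rfl | ha
      · exfalso
        rcases hbD with hb' | hb'
        · simp only [bwdS, Finset.coe_image, Set.mem_image, Finset.mem_coe,
            Finset.mem_filter] at hb'
          obtain ⟨q, ⟨hq, _⟩, rfl⟩ := hb'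
          exact asymm L (htp q hq) hab
        · simp only [Set.mem_singleton_iff] at hb'
          exact asymm L hlotp (hb' ▸ hab)
      · rcases Finset.mem_insert.mp ha with rfl | ha
        · exact Or.inr rfl
        · rcases hbD with hb' | hb'
          · obtain ⟨p, hp, rfl⟩ := Finset.mem_image.mp ha
            have hbf : b ∈ P.image Prod.fst := by exact_mod_cast bwdS_sub L P y m hb'
            exact Or.inl (bwdS_dc L P hP y m p.1 (mem_fst hp) b hbf hab hb')
          · exfalso
            simp only [Set.mem_singleton_iff] at hb'
            obtain ⟨p, hp, rfl⟩ := Finset.mem_image.mp ha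
            exact asymm L (hlo p hp) (hb' ▸ hab)
    · simp only [if_neg h] at hbD ⊢
      exact dcl_dc L i _ A a ha b hb hab hbD
  obtain ⟨a, haA, ha⟩ := hL.extension A D h1 h2
  have hloa : L.lt m lo a := by
    refine (ha m lo hloA).mpr ?_
    rw [hD]; simp only [if_pos rfl]; exact Or.inr rfl
  have hntpa : ¬ L.lt m tp a := by
    intro h
    have := (ha m tp htpA).mp h
    rw [hD] at this; simp only [if_pos rfl] at this
    rcases this with h' | h'
    · exact htpnfst (by exact_mod_cast bwdS_sub L P y m h')
    · simp only [Set.mem_singleton_iff] at h'; exact htpnlo h'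
  have hatp : L.lt m a tp := lt_of_ne_not_lt L (fun h => haA (h ▸ htpA)) hntpa
  have hane : ∀ q ∈ P, a ≠ q.1 := fun q hq h => haA (h ▸ hPA q hq)
  have key : ∀ i : Fin n, ∀ q ∈ P, (L.lt i q.1 a ↔ L.lt i q.2 y) := by
    intro i q hq
    by_cases hi : i = m
    · rw [hi]
      have hiff := ha m q.1 (hPA q hq)
      rw [hD] at hiff; simp only [if_pos rfl] at hiff
      rw [hiff]
      have hq1nlo : q.1 ≠ lo := fun h => L.irrefl m lo (h ▸ hlo q hq)
      constructor
      · rintro (h' | h')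
        · exact (bwdS_iff L P hP y m hq).mp h'
        · simp only [Set.mem_singleton_iff] at h'; exact absurd h' hq1nlo
      · intro h'; exact Or.inl ((bwdS_iff L P hP y m hq).mpr h')
    · have hiff := ha i q.1 (hPA q hq)
      rw [hD] at hiff; simp only [if_neg hi] at hiff
      rw [hiff.trans
        (dcl_inter L (bwdS_sub L P y i) (bwdS_dc L P hP y i) (mem_fst hq) (hPA q hq)),
        bwdS_iff L P hP y i hq]
  exact ⟨a, hane, hatp, hloa, isIso.insert L hP hane hy key⟩

def Inv (P : Finset (M × M)) (t bo : M) : Prop :=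
  isIso L P ∧ (∀ q ∈ P, L.lt m q.1 t) ∧ L.lt m (G.symm bo) bo ∧
  (∀ q ∈ P, L.lt m (G.symm bo) q.1) ∧ (L.lt m bo t ∨ bo = t)

include hL hG hZ hV in
lemma stepEx [Nonempty M] (P : Finset (M × M)) (t bo : M)
    (hInv : Inv L m G P t bo) (x : M) :
    ∃ P' t' bo', P ⊆ P' ∧ Inv L m G P' t' bo' ∧
      (∃ β, (x, β) ∈ P') ∧ (∃ ξ, (ξ, x) ∈ P') ∧
      (∃ b d, (t, b) ∈ P' ∧ (d, G b) ∈ P' ∧ t' = G d) ∧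
      (∃ u, (G.symm bo, u) ∈ P' ∧ (bo', G.symm u) ∈ P') ∧
      L.lt m x t' ∧ L.lt m bo' x ∧ L.lt m t t' := by
  classical
  obtain ⟨hIso, hTop, hBotV, hBotE, hBotT⟩ := hInv
  have hGs : ∀ (i : Fin n) (a c : M), L.lt i a c ↔ L.lt i (G.symm a) (G.symm c) := by
    intro i a c
    conv_lhs => rw [← Equiv.apply_symm_apply G a, ← Equiv.apply_symm_apply G c]
    exact (hG i _ _).symm
  -- Phase U: extend at the top orbit point t
  obtain ⟨b, hb1, hb2, hbZ, iso1⟩ := extend_fwd_ztop L hL m G hG hZ P hIso t hTop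
      ((P.image Prod.snd).image (fun y => G.symm y))
  set P1 : Finset (M × M) := insert (t, b) P with hP1
  have hb2' : ∀ q ∈ P, L.lt m (G.symm q.2) b := fun q hq =>
    hb2 _ (Finset.mem_image.mpr ⟨q.2, mem_snd hq, rfl⟩)
  have hc : ∀ q ∈ P1, L.lt m q.2 (G b) := by
    intro q hq
    rcases Finset.mem_insert.mp hq with rfl | hq
    · exact hbZ
    · have := (hG m (G.symm q.2) b).mp (hb2' q hq)
      simpa using this
  obtain ⟨d, hd1, hd2, hdZ, iso2⟩ := extend_bwd_ztop L hL m G hG hZ P1 iso1 (G b) hc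
      ({bo, G.symm bo, G.symm x} : Finset M)
  set P2 : Finset (M × M) := insert (d, G b) P1 with hP2
  have htd : L.lt m t d := hd1 (t, b) (Finset.mem_insert_self _ _)
  have htt' : L.lt m t (G d) := L.trans _ _ _ _ htd hdZ
  have hdbo : L.lt m bo d := hd2 bo (by simp)
  have hdsbo : L.lt m (G.symm bo) d := hd2 (G.symm bo) (by simp)
  have hdsx : L.lt m (G.symm x) d := hd2 (G.symm x) (by simp)
  have hxt' : L.lt m x (G d) := by
    have := (hG m (G.symm x) d).mp hdsx
    simpa using this
  have hDom2t' : ∀ q ∈ P2, L.lt m q.1 (G d) := by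
    intro q hq
    rcases Finset.mem_insert.mp hq with rfl | hq
    · exact hdZ
    · exact L.trans _ _ _ _ (hd1 q hq) hdZ
  -- Phase D: extend below, at e = G⁻¹ bo
  have he : ∀ q ∈ P2, L.lt m (G.symm bo) q.1 := by
    intro q hq
    rcases Finset.mem_insert.mp hq with rfl | hq
    · exact hdsbo
    · rcases Finset.mem_insert.mp hq with rfl | hq
      · rcases hBotT with h | h
        · exact L.trans _ _ _ _ hBotV h
        · exact h ▸ hBotV
      · exact hBotE q hq
  obtain ⟨u, hu1, hu2, huV, iso3⟩ := extend_fwd_vbot L hL m G hG hV P2 iso2 (G.symm bo) he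
      ((P2.image Prod.snd).image (fun y => G y))
  set P3 : Finset (M × M) := insert (G.symm bo, u) P2 with hP3
  have hu2' : ∀ q ∈ P2, L.lt m u (G q.2) := fun q hq =>
    hu2 _ (Finset.mem_image.mpr ⟨q.2, mem_snd hq, rfl⟩)
  have hv : ∀ q ∈ P3, L.lt m (G.symm u) q.2 := by
    intro q hq
    rcases Finset.mem_insert.mp hq with rfl | hq
    · exact huV
    · have := (hGs m u (G q.2)).mp (hu2' q hq)
      simpa using this
  obtain ⟨w, hw1, hw2, hwV, iso4⟩ := extend_bwd_vbot L hL m G hG hV P3 iso3 (G.symm u) hv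
      ({x, G x, G d} : Finset M)
  set P4 : Finset (M × M) := insert (w, G.symm u) P3 with hP4
  have hwx : L.lt m w x := hw2 x (by simp)
  have hwGx : L.lt m w (G x) := hw2 (G x) (by simp)
  have hwt' : L.lt m w (G d) := hw2 (G d) (by simp)
  have hswx : L.lt m (G.symm w) x := by
    have := (hGs m w (G x)).mp hwGx
    simpa using this
  -- Phase T: make x a member of the domain
  obtain ⟨P5, hP45, iso5, hx5, hnew5⟩ :
      ∃ P5, P4 ⊆ P5 ∧ isIso L P5 ∧ (∃ q ∈ P5, q.1 = x) ∧
        ∀ q ∈ P5, q ∈ P4 ∨ q.1 = x := by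
    by_cases hxdom : ∃ q ∈ P4, q.1 = x
    · exact ⟨P4, Finset.Subset.refl _, iso4, hxdom, fun q hq => Or.inl hq⟩
    · push_neg at hxdom
      obtain ⟨β, hβ, iso5⟩ := extend_fwd_plain L hL P4 iso4 x
        (fun q hq => Ne.symm (hxdom q hq))
      refine ⟨insert (x, β) P4, Finset.subset_insert _ _, iso5,
        ⟨(x, β), Finset.mem_insert_self _ _, rfl⟩, ?_⟩
      intro q hq
      rcases Finset.mem_insert.mp hq with rfl | hq
      · exact Or.inr rfl
      · exact Or.inl hq
  -- facts about P5
  have hDom4t' : ∀ q ∈ P4, L.lt m q.1 (G d) := by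
    intro q hq
    rcases Finset.mem_insert.mp hq with rfl | hq
    · exact hwt'
    · rcases Finset.mem_insert.mp hq with rfl | hq
      · exact L.trans _ _ _ _ (he (t, b) (Finset.mem_insert_of_mem (Finset.mem_insert_self _ _))) htt'
      · exact hDom2t' q hq
  have hDom5t' : ∀ q ∈ P5, L.lt m q.1 (G d) := by
    intro q hq
    rcases hnew5 q hq with hq | hq
    · exact hDom4t' q hq
    · exact hq ▸ hxt'
  have hlo4 : ∀ q ∈ P4, L.lt m (G.symm w) q.1 := by
    intro q hq
    rcases Finset.mem_insert.mp hq with rfl | hq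
    · exact hwV
    · exact L.trans _ _ _ _ hwV (hw1 q hq)
  have hlo5 : ∀ q ∈ P5, L.lt m (G.symm w) q.1 := by
    intro q hq
    rcases hnew5 q hq with hq | hq
    · exact hlo4 q hq
    · exact hq ▸ hswx
  have hlotp : L.lt m (G.symm w) (G d) := L.trans _ _ _ _ hwV hwt'
  -- Phase T': make x a member of the range
  obtain ⟨P6, hP56, iso6, hx6, hnew6⟩ :
      ∃ P6, P5 ⊆ P6 ∧ isIso L P6 ∧ (∃ q ∈ P6, q.2 = x) ∧
        ∀ q ∈ P6, q ∈ P5 ∨ (L.lt m q.1 (G d) ∧ L.lt m (G.symm w) q.1) := by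
    by_cases hxr : ∃ q ∈ P5, q.2 = x
    · exact ⟨P5, Finset.Subset.refl _, iso5, hxr, fun q hq => Or.inl hq⟩
    · push_neg at hxr
      obtain ⟨ξ, hξ1, hξtp, hξlo, iso6⟩ := extend_bwd_float L hL m P5 iso5 x
        (fun q hq => Ne.symm (hxr q hq)) (G d) (G.symm w) hDom5t' hlo5 hlotp
      refine ⟨insert (ξ, x) P5, Finset.subset_insert _ _, iso6,
        ⟨(ξ, x), Finset.mem_insert_self _ _, rfl⟩, ?_⟩
      intro q hq
      rcases Finset.mem_insert.mp hq with rfl | hq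
      · exact Or.inr ⟨hξtp, hξlo⟩
      · exact Or.inl hq
  -- assemble
  have hP12 : P1 ⊆ P2 := Finset.subset_insert _ _
  have hP23 : P2 ⊆ P3 := Finset.subset_insert _ _
  have hP34 : P3 ⊆ P4 := Finset.subset_insert _ _
  have hPP6 : P ⊆ P6 := fun q hq => hP56 (hP45 (hP34 (hP23 (hP12 (Finset.mem_insert_of_mem hq)))))
  have hP16 : P1 ⊆ P6 := fun q hq => hP56 (hP45 (hP34 (hP23 (hP12 hq))))
  have hP26 : P2 ⊆ P6 := fun q hq => hP56 (hP45 (hP34 (hP23 hq)))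
  have hP36 : P3 ⊆ P6 := fun q hq => hP56 (hP45 (hP34 hq))
  have hP46 : P4 ⊆ P6 := fun q hq => hP56 (hP45 hq)
  refine ⟨P6, G d, w, hPP6, ?_, ?_, ?_, ?_, ?_, hxt', hwx, htt'⟩
  · refine ⟨iso6, ?_, hwV, ?_, Or.inl hwt'⟩
    · intro q hq
      rcases hnew6 q hq with hq | hq
      · exact hDom5t' q hq
      · exact hq.1
    · intro q hq
      rcases hnew6 q hq with hq | hq
      · exact hlo5 q hq
      · exact hq.2
  · obtain ⟨q, hq, hq1⟩ := hx5
    exact ⟨q.2, by rw [← hq1]; exact hP56 hq⟩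
  · obtain ⟨q, hq, hq2⟩ := hx6
    exact ⟨q.1, by rw [← hq2]; exact hq⟩
  · exact ⟨b, d, hP16 (Finset.mem_insert_self _ _), hP26 (Finset.mem_insert_self _ _), rfl⟩
  · exact ⟨u, hP36 (Finset.mem_insert_self _ _), hP46 (Finset.mem_insert_self _ _)⟩

end Stmt9Aux

/-- Let `g` be an automorphism of a universal `n`-linear order such
that every `x` has some `y <_m x` with `y <_m g y` and some `z >_m x` with `z <_m g z`.
Then there is an automorphism `h` such that `g ∘ h⁻¹ ∘ g ∘ h` has a single `+`-orbital
with respect to `<_m`. -/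
theorem stmt9 {n : ℕ} {M : Type*} (L : NLinear n M) (hL : IsUniversalNLinear n M L)
    (m : Fin n) (g : L.aut)
    (hg : ∀ x : M, (∃ y, L.lt m y x ∧ L.lt m y ((g : Equiv.Perm M) y)) ∧
      (∃ z, L.lt m x z ∧ L.lt m z ((g : Equiv.Perm M) z))) :
    ∃ h : L.aut, L.SinglePlus m ((g * h⁻¹ * g * h : L.aut) : Equiv.Perm M) := by
  classical
  haveI : DecidableEq M := Classical.decEq M
  haveI := hL.countable
  haveI := hL.infinite
  haveI : Nonempty M := inferInstance
  obtain ⟨dm⟩ : Nonempty (Denumerable M) := nonempty_denumerable_iff.mpr ⟨hL.countable, hL.infinite⟩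
  haveI := dm
  let eqv : M ≃ ℕ := Denumerable.eqv M
  set G : Equiv.Perm M := (g : Equiv.Perm M) with hGdef
  have hG : ∀ (i : Fin n) (a b : M), L.lt i a b ↔ L.lt i (G a) (G b) := g.2
  have hZ : ∀ x, ∃ z, L.lt m x z ∧ L.lt m z (G z) := fun x => (hg x).2
  have hV : ∀ x, ∃ w, L.lt m w x ∧ L.lt m (G.symm w) w := by
    intro x
    obtain ⟨y, hy1, hy2⟩ := (hg (G.symm x)).1
    refine ⟨G y, ?_, ?_⟩
    · have := (hG m y (G.symm x)).mp hy1
      simpa using this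
    · simpa using hy2
  have hGs : ∀ (i : Fin n) (a c : M), L.lt i a c ↔ L.lt i (G.symm a) (G.symm c) := by
    intro i a c
    conv_lhs => rw [← Equiv.apply_symm_apply G a, ← Equiv.apply_symm_apply G c]
    exact (hG i _ _).symm
  obtain ⟨a0, -, ha0V⟩ := hV (Classical.arbitrary M)
  have inv0 : Stmt9Aux.Inv L m G (∅ : Finset (M × M)) a0 a0 :=
    ⟨fun i p hp => absurd hp (Finset.notMem_empty p),
     fun q hq => absurd hq (Finset.notMem_empty q), ha0V,
     fun q hq => absurd hq (Finset.notMem_empty q), Or.inr rfl⟩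
  -- the recursion
  let T := {s : Finset (M × M) × M × M // Stmt9Aux.Inv L m G s.1 s.2.1 s.2.2}
  let Rel : T → T → ℕ → Prop := fun s s' k =>
    s.1.1 ⊆ s'.1.1 ∧
    (∃ β, (eqv.symm k, β) ∈ s'.1.1) ∧ (∃ ξ, (ξ, eqv.symm k) ∈ s'.1.1) ∧
    (∃ b d, (s.1.2.1, b) ∈ s'.1.1 ∧ (d, G b) ∈ s'.1.1 ∧ s'.1.2.1 = G d) ∧
    (∃ u, (G.symm s.1.2.2, u) ∈ s'.1.1 ∧ (s'.1.2.2, G.symm u) ∈ s'.1.1) ∧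
    L.lt m (eqv.symm k) s'.1.2.1 ∧ L.lt m s'.1.2.2 (eqv.symm k) ∧ L.lt m s.1.2.1 s'.1.2.1
  have stp : ∀ (s : T) (k : ℕ), ∃ s' : T, Rel s s' k := by
    rintro ⟨⟨P, t, bo⟩, hinv⟩ k
    obtain ⟨P', t', bo', hsub, hinv', hβ, hξ, hbd, hu, h1, h2, h3⟩ :=
      Stmt9Aux.stepEx L hL m G hG hZ hV P t bo hinv (eqv.symm k)
    exact ⟨⟨(P', t', bo'), hinv'⟩, hsub, hβ, hξ, hbd, hu, h1, h2, h3⟩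
  choose next hnext using stp
  let seq : ℕ → T := fun k => Nat.rec ⟨(∅, a0, a0), inv0⟩ (fun k s => next s k) k
  have hseq : ∀ k, Rel (seq k) (seq (k + 1)) k := fun k => hnext (seq k) k
  set Pk : ℕ → Finset (M × M) := fun k => (seq k).1.1 with hPk
  set tk : ℕ → M := fun k => (seq k).1.2.1 with htk
  set bok : ℕ → M := fun k => (seq k).1.2.2 with hbok
  have hIsoK : ∀ k, Stmt9Aux.isIso L (Pk k) := fun k => ((seq k).2).1
  have mono : ∀ j k, j ≤ k → Pk j ⊆ Pk k := by
    intro j k hjk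
    induction k, hjk using Nat.le_induction with
    | base => exact Finset.Subset.refl _
    | succ k hjk ih => exact ih.trans (hseq k).1
  have glueS : ∀ {j k : ℕ} {q r : M × M}, q ∈ Pk j → r ∈ Pk k → q.1 = r.1 → q.2 = r.2 := by
    intro j k q r hq hr he
    exact Stmt9Aux.isIso.sndUniq L m (hIsoK (max j k))
      (mono j (max j k) (le_max_left _ _) hq) (mono k (max j k) (le_max_right _ _) hr) he
  have glueF : ∀ {j k : ℕ} {q r : M × M}, q ∈ Pk j → r ∈ Pk k → q.2 = r.2 → q.1 = r.1 := by
    intro j k q r hq hr he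
    exact Stmt9Aux.isIso.fstUniq L m (hIsoK (max j k))
      (mono j (max j k) (le_max_left _ _) hq) (mono k (max j k) (le_max_right _ _) hr) he
  have domTot : ∀ x : M, ∃ y k, (x, y) ∈ Pk k := by
    intro x
    obtain ⟨β, hβ⟩ := (hseq (eqv x)).2.1
    refine ⟨β, eqv x + 1, ?_⟩
    simpa using hβ
  have ranTot : ∀ y : M, ∃ a k, (a, y) ∈ Pk k := by
    intro y
    obtain ⟨ξ, hξ⟩ := (hseq (eqv y)).2.2.1
    refine ⟨ξ, eqv y + 1, ?_⟩
    simpa using hξ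
  choose Hf Kf hHf using domTot
  choose Gf Jf hGf using ranTot
  have hApply : ∀ {k : ℕ} {a c : M}, (a, c) ∈ Pk k → Hf a = c := by
    intro k a c hq
    exact glueS (hHf a) hq rfl
  have hSymmApp : ∀ {k : ℕ} {a c : M}, (a, c) ∈ Pk k → Gf c = a := by
    intro k a c hq
    exact glueF (hGf c) hq rfl
  have leftInv : Function.LeftInverse Gf Hf := by
    intro x
    exact hSymmApp (hHf x)
  have rightInv : Function.RightInverse Gf Hf := by
    intro y
    exact hApply (hGf y)
  let hperm : Equiv.Perm M := ⟨Hf, Gf, leftInv, rightInv⟩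
  have hmem : hperm ∈ L.aut := by
    intro i a c
    have h1 := hHf a
    have h2 := hHf c
    exact (hIsoK (max (Kf a) (Kf c))) i (a, Hf a)
      (mono _ _ (le_max_left _ _) h1) (c, Hf c) (mono _ _ (le_max_right _ _) h2)
  let h' : L.aut := ⟨hperm, hmem⟩
  set F : Equiv.Perm M := ((g * h'⁻¹ * g * h' : L.aut) : Equiv.Perm M) with hFdef
  have hFapp : ∀ z : M, F z = G (Gf (G (Hf z))) := fun z => rfl
  have topStep : ∀ k, F (tk k) = tk (k + 1) := by
    intro k
    obtain ⟨b, d, hb, hd, ht'⟩ := (hseq k).2.2.2.1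
    have e1 : Hf (tk k) = b := hApply (k := k + 1) (show (tk k, b) ∈ Pk (k + 1) from hb)
    have e2 : Gf (G b) = d := hSymmApp (k := k + 1) (show (d, G b) ∈ Pk (k + 1) from hd)
    have e3 : tk (k + 1) = G d := ht'
    rw [hFapp, e1, e2, ← e3]
  have botStep : ∀ k, F (bok (k + 1)) = bok k := by
    intro k
    obtain ⟨u, hu, hv⟩ := (hseq k).2.2.2.2.1
    have e1 : Hf (bok (k + 1)) = G.symm u :=
      hApply (k := k + 1) (show (bok (k + 1), G.symm u) ∈ Pk (k + 1) from hv)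
    have e2 : Gf u = G.symm (bok k) :=
      hSymmApp (k := k + 1) (show (G.symm (bok k), u) ∈ Pk (k + 1) from hu)
    rw [hFapp, e1, Equiv.apply_symm_apply, e2, Equiv.apply_symm_apply]
  have ht0 : tk 0 = a0 := rfl
  have hbo0 : bok 0 = a0 := rfl
  have powTop : ∀ k : ℕ, (F ^ k) a0 = tk k := by
    intro k
    induction k with
    | zero => simpa using ht0.symm
    | succ k ih =>
      rw [pow_succ' F k, Equiv.Perm.mul_apply, ih, topStep k]
  have powBot : ∀ k : ℕ, ((F⁻¹) ^ k) a0 = bok k := by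
    intro k
    induction k with
    | zero => simpa using hbo0.symm
    | succ k ih =>
      rw [pow_succ' F⁻¹ k, Equiv.Perm.mul_apply, ih]
      have := botStep k
      calc F⁻¹ (bok k) = F⁻¹ (F (bok (k+1))) := by rw [this]
        _ = bok (k+1) := Equiv.symm_apply_apply F _
  refine ⟨h', a0, ?_, ?_, ?_⟩
  · have h1 : F a0 = tk 1 := topStep 0
    rw [h1]
    exact (hseq 0).2.2.2.2.2.2.2
  · intro x
    refine ⟨((eqv x + 1 : ℕ) : ℤ), ?_⟩
    rw [zpow_natCast, powTop]
    have := (hseq (eqv x)).2.2.2.2.2.1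
    simpa using this
  · intro x
    refine ⟨-((eqv x + 1 : ℕ) : ℤ), ?_⟩
    rw [zpow_neg, zpow_natCast, ← inv_pow, powBot]
    have := (hseq (eqv x)).2.2.2.2.2.2.1
    simpa using this
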